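/- arXiv:1707.08635 — 5 statements merged into one kernel-verified Lean document; each statement's English description precedes it below -/
import Mathlib

section
/- Let a, b be positive reals with b/a irrational, and let m, n be positive integers. Then m·a < n·b if and only if m + ⌊m·a/b⌋ < n + ⌊n·b/a⌋. In other words, for an irrational ellipsoid the ordering of closed Reeb orbits by period coincides with the ordering by Conley–Zehnder index. -/
private lemma key_period_cz (a b : ℝ) (ha : 0 < a) (hb : 0 < b) (m n : ℕ)
    (h : (m : ℝ) * a < (n : ℝ) * b) :
    (m : ℤ) + ⌊(m : ℝ) * a / b⌋ < (n : ℤ) + ⌊(n : ℝ) * b / a⌋ := by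
  have h1 : ⌊(m : ℝ) * a / b⌋ < (n : ℤ) := by
    apply Int.floor_lt.mpr
    rw [div_lt_iff₀ hb]
    push_cast
    linarith
  have h2 : (m : ℤ) ≤ ⌊(n : ℝ) * b / a⌋ := by
    apply Int.le_floor.mpr
    rw [le_div_iff₀ ha]
    push_cast
    linarith
  linarith

theorem period_order_iff_cz_order (a b : ℝ) (ha : 0 < a) (hb : 0 < b)
    (hirr : Irrational (b / a)) (m n : ℕ) (hm : 0 < m) (hn : 0 < n) :
    (m : ℝ) * a < (n : ℝ) * b ↔
      (m : ℤ) + ⌊(m : ℝ) * a / b⌋ < (n : ℤ) + ⌊(n : ℝ) * b / a⌋ := by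
  constructor
  · exact fun h => key_period_cz a b ha hb m n h
  · intro h
    by_contra hle
    push_neg at hle
    have hne : (m : ℝ) * a ≠ (n : ℝ) * b := by
      intro heq
      have : b / a = (m : ℝ) / n := by
        field_simp
        rw [mul_comm (b : ℝ) (n : ℝ)]
        linarith
      rw [this] at hirr
      exact hirr ⟨(m : ℚ) / n, by push_cast; ring⟩
    have hlt : (n : ℝ) * b < (m : ℝ) * a := lt_of_le_of_ne hle (Ne.symm hne)
    have := key_period_cz b a hb ha n m hlt
    linarith
end

section
/- Let a₁ < b₁ and a₂ < b₂ be positive reals, and let k, ℓ, p, r be positive integers with k < b₁/a₁, k = ℓ + ⌊ℓ·a₂/b₂⌋, and p·r ≤ ℓ. Suppose positive integers r⁻₁,…,r⁻_m and s⁻₁,…,s⁻_n satisfy r + ⌊r·a₂/b₂⌋ − Σᵢ (r⁻ᵢ + ⌊r⁻ᵢ·a₁/b₁⌋) − Σⱼ (s⁻ⱼ + ⌊s⁻ⱼ·b₁/a₁⌋) ≥ 0. Then n = 0; that is, there can be no terms of the form s⁻ⱼ. -/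
open Finset

theorem no_beta_punctures (a₁ b₁ a₂ b₂ : ℝ) (ha₁ : 0 < a₁) (hab₁ : a₁ < b₁)
    (ha₂ : 0 < a₂) (hab₂ : a₂ < b₂)
    (k ℓ p r : ℕ) (hk : 0 < k) (hℓ : 0 < ℓ) (hp : 0 < p) (hr : 0 < r)
    (hkb : (k : ℝ) < b₁ / a₁)
    (hkℓ : (k : ℤ) = (ℓ : ℤ) + ⌊(ℓ : ℝ) * a₂ / b₂⌋)
    (hpr : p * r ≤ ℓ)
    (m n : ℕ) (rm : Fin m → ℕ) (sn : Fin n → ℕ)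
    (hrm : ∀ i, 0 < rm i) (hsn : ∀ j, 0 < sn j)
    (hind : 0 ≤ (r : ℤ) + ⌊(r : ℝ) * a₂ / b₂⌋
        - (∑ i, ((rm i : ℤ) + ⌊(rm i : ℝ) * a₁ / b₁⌋))
        - ∑ j, ((sn j : ℤ) + ⌊(sn j : ℝ) * b₁ / a₁⌋)) :
    n = 0 := by
  by_contra h
  have hn : 0 < n := Nat.pos_of_ne_zero h
  have hb₁ : 0 < b₁ := ha₁.trans hab₁
  have hb₂ : 0 < b₂ := ha₂.trans hab₂
  -- r ≤ ℓ
  have hrℓ : r ≤ ℓ := le_trans (Nat.le_mul_of_pos_left r hp) hpr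
  have hkk : (k : ℤ) ≤ ⌊b₁ / a₁⌋ := Int.le_floor.mpr hkb.le
  -- first term ≤ k
  have h1 : (r : ℤ) + ⌊(r : ℝ) * a₂ / b₂⌋ ≤ (k : ℤ) := by
    rw [hkℓ]
    have : ⌊(r : ℝ) * a₂ / b₂⌋ ≤ ⌊(ℓ : ℝ) * a₂ / b₂⌋ := by
      exact Int.floor_le_floor ((div_le_div_iff_of_pos_right hb₂).mpr
        (mul_le_mul_of_nonneg_right (show (r:ℝ) ≤ ℓ by exact_mod_cast hrℓ) ha₂.le))
    have := (Int.ofNat_le.mpr hrℓ)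
    omega
  -- rm sum nonneg
  have h2 : 0 ≤ ∑ i, ((rm i : ℤ) + ⌊(rm i : ℝ) * a₁ / b₁⌋) := by
    apply Finset.sum_nonneg
    intro i _
    have : (0 : ℤ) ≤ ⌊(rm i : ℝ) * a₁ / b₁⌋ := by
      apply Int.floor_nonneg.mpr
      positivity
    have h1 : (1 : ℤ) ≤ rm i := by exact_mod_cast hrm i
    omega
  -- each sn term > k
  have h3 : ((k : ℤ) + 1) * n ≤ ∑ j, ((sn j : ℤ) + ⌊(sn j : ℝ) * b₁ / a₁⌋) := by
    have : ((k : ℤ) + 1) * n = ∑ _j : Fin n, ((k : ℤ) + 1) := by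
      simp only [Finset.sum_const, Finset.card_univ, Fintype.card_fin, smul_eq_mul]
      ring
    rw [this]
    apply Finset.sum_le_sum
    intro j _
    · 
      have hs1 : (1 : ℤ) ≤ sn j := by exact_mod_cast hsn j
      have : ⌊b₁ / a₁⌋ ≤ ⌊(sn j : ℝ) * b₁ / a₁⌋ := by
        apply Int.floor_le_floor
        rw [mul_div_assoc]
        nth_rewrite 1 [← one_mul (b₁ / a₁)]
        apply mul_le_mul_of_nonneg_right _ (by positivity)
        exact_mod_cast hsn j
      omega
  have hn1 : (1 : ℤ) ≤ n := by exact_mod_cast hn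
  nlinarith [h1, h2, h3, hind]
end

section
/- Let a₁ < b₁, a₂ < b₂ be positive reals, k, ℓ, p, r, s positive integers with r·p = k, s·p = ℓ, and k < b₁/a₁. Define index(u) = 2(ℓ + ⌊ℓ·a₂/b₂⌋ − k − ⌊k·a₁/b₁⌋) and index(v) = 2(s + ⌊s·a₂/b₂⌋ − r − ⌊r·a₁/b₁⌋). Then index(u) − p·index(v) = 2(⌊p·s·a₂/b₂⌋ − p·⌊s·a₂/b₂⌋) ≥ 0. In particular, if index(u) = 0 and index(v) ≥ 0 then index(v) = 0. -/
theorem underlying_index_zero (a₁ b₁ a₂ b₂ : ℝ) (ha₁ : 0 < a₁) (hab₁ : a₁ < b₁)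
    (ha₂ : 0 < a₂) (hab₂ : a₂ < b₂)
    (k ℓ p r s : ℕ) (hk : 0 < k) (hℓ : 0 < ℓ) (hp : 0 < p) (hr : 0 < r) (hs : 0 < s)
    (hrp : r * p = k) (hsp : s * p = ℓ) (hkb : (k : ℝ) < b₁ / a₁) :
    (2 * ((ℓ : ℤ) + ⌊(ℓ : ℝ) * a₂ / b₂⌋ - (k : ℤ) - ⌊(k : ℝ) * a₁ / b₁⌋)
        - (p : ℤ) * (2 * ((s : ℤ) + ⌊(s : ℝ) * a₂ / b₂⌋ - (r : ℤ) - ⌊(r : ℝ) * a₁ / b₁⌋))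
      = 2 * (⌊(p : ℝ) * (s : ℝ) * a₂ / b₂⌋ - (p : ℤ) * ⌊(s : ℝ) * a₂ / b₂⌋)) ∧
    0 ≤ 2 * (⌊(p : ℝ) * (s : ℝ) * a₂ / b₂⌋ - (p : ℤ) * ⌊(s : ℝ) * a₂ / b₂⌋) ∧
    (2 * ((ℓ : ℤ) + ⌊(ℓ : ℝ) * a₂ / b₂⌋ - (k : ℤ) - ⌊(k : ℝ) * a₁ / b₁⌋) = 0 →
      0 ≤ 2 * ((s : ℤ) + ⌊(s : ℝ) * a₂ / b₂⌋ - (r : ℤ) - ⌊(r : ℝ) * a₁ / b₁⌋) →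
      2 * ((s : ℤ) + ⌊(s : ℝ) * a₂ / b₂⌋ - (r : ℤ) - ⌊(r : ℝ) * a₁ / b₁⌋) = 0) := by
  have hb₁ : 0 < b₁ := lt_trans ha₁ hab₁
  have hrk : r ≤ k := by nlinarith [hrp, hp, hr]
  have hfk : ⌊(k : ℝ) * a₁ / b₁⌋ = 0 := by
    apply Int.floor_eq_zero_iff.mpr
    constructor
    · positivity
    · have h : (k : ℝ) * a₁ < b₁ := (lt_div_iff₀ ha₁).mp hkb
      rw [div_lt_one hb₁]; linarith
  have hfr : ⌊(r : ℝ) * a₁ / b₁⌋ = 0 := by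
    apply Int.floor_eq_zero_iff.mpr
    constructor
    · positivity
    · have hrk' : (r : ℝ) ≤ (k : ℝ) := by exact_mod_cast hrk
      have hkb' : (k : ℝ) * a₁ < b₁ := by
        have := (lt_div_iff₀ ha₁).mp hkb; linarith
      have : (r : ℝ) * a₁ < b₁ := by nlinarith
      rw [div_lt_one hb₁]; linarith
  have hℓeq : ((ℓ : ℝ)) = (p : ℝ) * (s : ℝ) := by
    have : (ℓ : ℝ) = ((s * p : ℕ) : ℝ) := by rw [hsp]
    push_cast at this ⊢; linarith
  have hfl : ⌊(ℓ : ℝ) * a₂ / b₂⌋ = ⌊(p : ℝ) * (s : ℝ) * a₂ / b₂⌋ := by rw [hℓeq]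
  have hkℤ : (k : ℤ) = (p : ℤ) * (r : ℤ) := by exact_mod_cast (by rw [← hrp]; ring : k = p * r)
  have hℓℤ : (ℓ : ℤ) = (p : ℤ) * (s : ℤ) := by exact_mod_cast (by rw [← hsp]; ring : ℓ = p * s)
  have hfloor_le : (p : ℤ) * ⌊(s : ℝ) * a₂ / b₂⌋ ≤ ⌊(p : ℝ) * (s : ℝ) * a₂ / b₂⌋ := by
    apply Int.le_floor.mpr
    push_cast
    have h1 : (⌊(s : ℝ) * a₂ / b₂⌋ : ℝ) ≤ (s : ℝ) * a₂ / b₂ := Int.floor_le _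
    have hp' : (0 : ℝ) ≤ (p : ℝ) := by positivity
    calc (p : ℝ) * (⌊(s : ℝ) * a₂ / b₂⌋ : ℝ) ≤ (p : ℝ) * ((s : ℝ) * a₂ / b₂) :=
          mul_le_mul_of_nonneg_left h1 hp'
      _ = (p : ℝ) * (s : ℝ) * a₂ / b₂ := by ring
  refine ⟨by rw [hfk, hfr, hfl, hkℤ, hℓℤ]; ring, by linarith, ?_⟩
  intro hu hv
  have heq : 2 * ((ℓ : ℤ) + ⌊(ℓ : ℝ) * a₂ / b₂⌋ - (k : ℤ) - ⌊(k : ℝ) * a₁ / b₁⌋)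
        - (p : ℤ) * (2 * ((s : ℤ) + ⌊(s : ℝ) * a₂ / b₂⌋ - (r : ℤ) - ⌊(r : ℝ) * a₁ / b₁⌋))
      = 2 * (⌊(p : ℝ) * (s : ℝ) * a₂ / b₂⌋ - (p : ℤ) * ⌊(s : ℝ) * a₂ / b₂⌋) := by
    rw [hfk, hfr, hfl, hkℤ, hℓℤ]; ring
  have hp' : (0 : ℤ) < (p : ℤ) := by exact_mod_cast hp
  nlinarith [heq, hfloor_le, hv, hu, hp']
end

section
/- Let a₂ < b₂, a₁ < b₁ be positive reals, k, ℓ, p, r positive integers with k < b₁/a₁, k = ℓ + ⌊ℓ·a₂/b₂⌋, and p·r + ⌊p·r·b₂/a₂⌋ ≤ ℓ + ⌊ℓ·a₂/b₂⌋. Suppose positive integers r⁻₁,…,r⁻_m, s⁻₁,…,s⁻_n satisfy r + ⌊r·b₂/a₂⌋ − Σᵢ(r⁻ᵢ + ⌊r⁻ᵢ·a₁/b₁⌋) − Σⱼ(s⁻ⱼ + ⌊s⁻ⱼ·b₁/a₁⌋) ≥ 0. Then n = 0 and Σᵢ r⁻ᵢ ≤ k/p, and the quantity 2( p·r + ⌊p·r·b₂/a₂⌋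 − Σᵢ(p·r⁻ᵢ + ⌊p·r⁻ᵢ·a₁/b₁⌋) ) is nonnegative. -/
open Finset

theorem case_two_positive (a₁ b₁ a₂ b₂ : ℝ) (ha₁ : 0 < a₁) (hab₁ : a₁ < b₁)
    (ha₂ : 0 < a₂) (hab₂ : a₂ < b₂)
    (k ℓ p r : ℕ) (hk : 0 < k) (hℓ : 0 < ℓ) (hp : 0 < p) (hr : 0 < r)
    (hkb : (k : ℝ) < b₁ / a₁)
    (hkℓ : (k : ℤ) = (ℓ : ℤ) + ⌊(ℓ : ℝ) * a₂ / b₂⌋)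
    (hcz : (p : ℤ) * (r : ℤ) + ⌊(p : ℝ) * (r : ℝ) * b₂ / a₂⌋ ≤ (ℓ : ℤ) + ⌊(ℓ : ℝ) * a₂ / b₂⌋)
    (m n : ℕ) (rm : Fin m → ℕ) (sn : Fin n → ℕ)
    (hrm : ∀ i, 0 < rm i) (hsn : ∀ j, 0 < sn j)
    (hind : 0 ≤ (r : ℤ) + ⌊(r : ℝ) * b₂ / a₂⌋
        - (∑ i, ((rm i : ℤ) + ⌊(rm i : ℝ) * a₁ / b₁⌋))
        - ∑ j, ((sn j : ℤ) + ⌊(sn j : ℝ) * b₁ / a₁⌋)) :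
    n = 0 ∧ (∑ i, (rm i : ℝ)) ≤ (k : ℝ) / (p : ℝ) ∧
      0 ≤ 2 * ((p : ℤ) * (r : ℤ) + ⌊(p : ℝ) * (r : ℝ) * b₂ / a₂⌋
          - ∑ i, ((p : ℤ) * (rm i : ℤ) + ⌊(p : ℝ) * (rm i : ℝ) * a₁ / b₁⌋)) := by
  have hb₁ : (0:ℝ) < b₁ := ha₁.trans hab₁
  have hb₂ : (0:ℝ) < b₂ := ha₂.trans hab₂
  have hp' : (0:ℤ) < (p:ℤ) := by exact_mod_cast hp
  set t : ℤ := (r : ℤ) + ⌊(r : ℝ) * b₂ / a₂⌋ with ht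
  -- p * ⌊x⌋ ≤ ⌊p * x⌋
  have hfm : (p:ℤ) * ⌊(r:ℝ) * b₂ / a₂⌋ ≤ ⌊(p:ℝ) * (r:ℝ) * b₂ / a₂⌋ := by
    rw [Int.le_floor]
    push_cast
    have h1 : (⌊(r:ℝ) * b₂ / a₂⌋ : ℝ) ≤ (r:ℝ) * b₂ / a₂ := Int.floor_le _
    have h2 : (0:ℝ) ≤ (p:ℝ) := by positivity
    have := mul_le_mul_of_nonneg_left h1 h2
    calc (p:ℝ) * (⌊(r:ℝ) * b₂ / a₂⌋ : ℝ) ≤ (p:ℝ) * ((r:ℝ) * b₂ / a₂) := this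
      _ = (p:ℝ) * (r:ℝ) * b₂ / a₂ := by ring
  have hpt : (p:ℤ) * t ≤ (k:ℤ) := by
    rw [hkℓ]
    calc (p:ℤ) * t = (p:ℤ) * (r:ℤ) + (p:ℤ) * ⌊(r:ℝ) * b₂ / a₂⌋ := by ring
      _ ≤ (p:ℤ) * (r:ℤ) + ⌊(p:ℝ) * (r:ℝ) * b₂ / a₂⌋ := by linarith
      _ ≤ _ := hcz
  have ht0 : (0:ℤ) ≤ t := by
    have : (0:ℤ) ≤ ⌊(r:ℝ) * b₂ / a₂⌋ := Int.floor_nonneg.2 (by positivity)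
    have : (0:ℤ) ≤ (r:ℤ) := by positivity
    omega
  have htk : t ≤ (k:ℤ) := by nlinarith
  -- rm floor terms nonneg
  have hrf : ∀ i, (0:ℤ) ≤ ⌊(rm i:ℝ) * a₁ / b₁⌋ := fun i =>
    Int.floor_nonneg.2 (by positivity)
  -- sn terms ≥ k + 1
  have hsf : ∀ j, (k:ℤ) + 1 ≤ (sn j : ℤ) + ⌊(sn j:ℝ) * b₁ / a₁⌋ := by
    intro j
    have h1 : (k:ℤ) ≤ ⌊(sn j:ℝ) * b₁ / a₁⌋ := by
      rw [Int.le_floor]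
      have h2 : (1:ℝ) ≤ (sn j:ℝ) := by exact_mod_cast hsn j
      have h3 : (0:ℝ) < b₁ / a₁ := by positivity
      calc ((k:ℤ):ℝ) = (k:ℝ) := by push_cast; ring
        _ ≤ b₁ / a₁ := le_of_lt hkb
        _ = 1 * (b₁ / a₁) := by ring
        _ ≤ (sn j:ℝ) * (b₁ / a₁) := by nlinarith
        _ = (sn j:ℝ) * b₁ / a₁ := by ring
    have h2 : (1:ℤ) ≤ (sn j:ℤ) := by exact_mod_cast hsn j
    omega
  have hrmsum : (0:ℤ) ≤ ∑ i, ((rm i : ℤ) + ⌊(rm i : ℝ) * a₁ / b₁⌋) := by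
    apply Finset.sum_nonneg
    intro i _
    have : (0:ℤ) ≤ (rm i:ℤ) := by positivity
    have := hrf i
    omega
  -- n = 0
  have hn : n = 0 := by
    by_contra hne
    have hn0 : 0 < n := Nat.pos_of_ne_zero hne
    have hsingle : (k:ℤ) + 1 ≤ ∑ j, ((sn j : ℤ) + ⌊(sn j : ℝ) * b₁ / a₁⌋) := by
      calc (k:ℤ) + 1 ≤ (sn ⟨0, hn0⟩ : ℤ) + ⌊(sn ⟨0, hn0⟩ : ℝ) * b₁ / a₁⌋ := hsf _
        _ ≤ _ := Finset.single_le_sum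
            (f := fun j => (sn j : ℤ) + ⌊(sn j : ℝ) * b₁ / a₁⌋)
            (fun j _ => by linarith [hsf j, (by positivity : (0:ℤ) ≤ (k:ℤ))])
            (Finset.mem_univ _)
    linarith [hind]
  subst hn
  simp only [Finset.univ_eq_empty, Finset.sum_empty, sub_zero] at hind
  -- Σ rm ≤ t
  have hS : (∑ i, (rm i : ℤ)) ≤ t := by
    have h1 : (∑ i, (rm i : ℤ)) ≤ ∑ i, ((rm i : ℤ) + ⌊(rm i : ℝ) * a₁ / b₁⌋) := by
      apply Finset.sum_le_sum
      intro i _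
      have := hrf i; omega
    linarith
  have hSnn : (0:ℤ) ≤ ∑ i, (rm i : ℤ) :=
    Finset.sum_nonneg (fun i _ => by positivity)
  have hpS : (p:ℤ) * (∑ i, (rm i : ℤ)) ≤ (k:ℤ) := by nlinarith
  refine ⟨rfl, ?_, ?_⟩
  · rw [le_div_iff₀ (by exact_mod_cast hp : (0:ℝ) < (p:ℝ))]
    have : ((p:ℤ) * (∑ i, (rm i : ℤ)) : ℝ) ≤ ((k:ℤ) : ℝ) := by exact_mod_cast hpS
    push_cast at this ⊢
    linarith
  · -- each big floor is zero
    have hfz : ∀ i, ⌊(p:ℝ) * (rm i : ℝ) * a₁ / b₁⌋ = 0 := by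
      intro i
      have hle : (rm i : ℤ) ≤ ∑ i, (rm i : ℤ) :=
        Finset.single_le_sum (f := fun i => (rm i : ℤ)) (fun i _ => by positivity)
          (Finset.mem_univ i)
      have hpk : (p:ℤ) * (rm i : ℤ) ≤ (k:ℤ) := by nlinarith
      have hpkR : (p:ℝ) * (rm i : ℝ) ≤ (k:ℝ) := by exact_mod_cast hpk
      have hlt : (p:ℝ) * (rm i : ℝ) * a₁ / b₁ < 1 := by
        rw [div_lt_one hb₁]
        have h1 : (p:ℝ) * (rm i : ℝ) < b₁ / a₁ := lt_of_le_of_lt hpkR hkb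
        calc (p:ℝ) * (rm i : ℝ) * a₁ < (b₁ / a₁) * a₁ := by nlinarith
          _ = b₁ := by field_simp
      exact Int.floor_eq_zero_iff.2 ⟨by positivity, hlt⟩
    have hsum : ∑ i, ((p : ℤ) * (rm i : ℤ) + ⌊(p : ℝ) * (rm i : ℝ) * a₁ / b₁⌋)
        = (p:ℤ) * ∑ i, (rm i : ℤ) := by
      rw [Finset.mul_sum]
      apply Finset.sum_congr rfl
      intro i _
      rw [hfz i]
      ring
    rw [hsum]
    have h1 : (p:ℤ) * ∑ i, (rm i : ℤ) ≤ (p:ℤ) * t :=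
      mul_le_mul_of_nonneg_left hS (le_of_lt hp')
    have h2 : (p:ℤ) * t = (p:ℤ) * (r:ℤ) + (p:ℤ) * ⌊(r:ℝ) * b₂ / a₂⌋ := by ring
    linarith
end

section
/- Let a < b be positive reals. For any positive integers r⁺, and r⁻₁,…,r⁻_m, s⁻₁,…,s⁻_n with r⁺·a ≥ Σᵢ r⁻ᵢ·a + Σⱼ s⁻ⱼ·b, the integer I = (r⁺ + ⌊r⁺a/b⌋) − Σᵢ(r⁻ᵢ + ⌊r⁻ᵢa/b⌋) − Σⱼ(s⁻ⱼ + ⌊s⁻ⱼb/a⌋) is even as a contribution to the index 2I, and if r⁺·a > Σᵢ r⁻ᵢ·a + Σⱼ s⁻ⱼ·b (strict inequality, i.e. positive dλ-area) with b/a irrational, then I ≥ 1, i.e. the index 2I is at least 2. -/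
open Finset

theorem positive_area_index_ge_two (a b : ℝ) (ha : 0 < a) (hab : a < b)
    (rp : ℕ) (hrp : 0 < rp) (m n : ℕ) (r : Fin m → ℕ) (s : Fin n → ℕ)
    (hr : ∀ i, 0 < r i) (hs : ∀ j, 0 < s j)
    (harea : (∑ i, (r i : ℝ)) * a + (∑ j, (s j : ℝ)) * b ≤ (rp : ℝ) * a) :
    Even (2 * (((rp : ℤ) + ⌊(rp : ℝ) * a / b⌋)
        - (∑ i, ((r i : ℤ) + ⌊(r i : ℝ) * a / b⌋))
        - ∑ j, ((s j : ℤ) + ⌊(s j : ℝ) * b / a⌋))) ∧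
    (Irrational (b / a) →
      (∑ i, (r i : ℝ)) * a + (∑ j, (s j : ℝ)) * b < (rp : ℝ) * a →
      1 ≤ ((rp : ℤ) + ⌊(rp : ℝ) * a / b⌋)
        - (∑ i, ((r i : ℤ) + ⌊(r i : ℝ) * a / b⌋))
        - ∑ j, ((s j : ℤ) + ⌊(s j : ℝ) * b / a⌋)) := by
  have hb : 0 < b := ha.trans hab
  refine ⟨even_two_mul _, fun _ hlt => ?_⟩
  set F : ℤ := ∑ i, ⌊(r i : ℝ) * a / b⌋ with hF
  set G : ℤ := ∑ j, ⌊(s j : ℝ) * b / a⌋ with hG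
  have hFr : (F : ℝ) ≤ (∑ i, (r i : ℝ)) * a / b := by
    rw [hF]; push_cast
    exact (Finset.sum_le_sum fun i _ => Int.floor_le ((r i : ℝ) * a / b)).trans_eq
      (by rw [← Finset.sum_div, ← Finset.sum_mul])
  have hGr : (G : ℝ) ≤ (∑ j, (s j : ℝ)) * b / a := by
    rw [hG]; push_cast
    exact (Finset.sum_le_sum fun j _ => Int.floor_le ((s j : ℝ) * b / a)).trans_eq
      (by rw [← Finset.sum_div, ← Finset.sum_mul])
  -- first bracket: rp ≥ Σ r + G + 1
  have h1 : (∑ i, (r i : ℤ)) + G + 1 ≤ (rp : ℤ) := by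
    have hre : ((∑ i, (r i : ℤ)) + G : ℝ) < (rp : ℝ) := by
      push_cast
      have h2 : (∑ j, (s j : ℝ)) * b / a < (rp : ℝ) - ∑ i, (r i : ℝ) := by
        rw [div_lt_iff₀ ha]
        nlinarith
      nlinarith
    exact_mod_cast Int.add_one_le_iff.mpr (by exact_mod_cast hre)
  -- second bracket: ⌊rp a / b⌋ ≥ F + Σ s
  have h2 : F + (∑ j, (s j : ℤ)) ≤ ⌊(rp : ℝ) * a / b⌋ := by
    apply Int.le_floor.mpr
    push_cast
    have : (∑ j, (s j : ℝ)) = (∑ j, (s j : ℝ)) * b / b := by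
      field_simp
    calc (F : ℝ) + ∑ j, (s j : ℝ)
        ≤ (∑ i, (r i : ℝ)) * a / b + (∑ j, (s j : ℝ)) * b / b := by
          rw [← this]; linarith
      _ = ((∑ i, (r i : ℝ)) * a + (∑ j, (s j : ℝ)) * b) / b := by ring
      _ ≤ (rp : ℝ) * a / b := by
          gcongr
  have hsum1 : (∑ i, ((r i : ℤ) + ⌊(r i : ℝ) * a / b⌋)) = (∑ i, (r i : ℤ)) + F := by
    rw [hF, Finset.sum_add_distrib]
  have hsum2 : (∑ j, ((s j : ℤ) + ⌊(s j : ℝ) * b / a⌋)) = (∑ j, (s j : ℤ)) + G := by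
    rw [hG, Finset.sum_add_distrib]
  rw [hsum1, hsum2]
  linarith
end
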